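/- For every real x ≥ -1/2 and every γ ∈ (0,1), one has (1+x)^γ ≤ 1 + γx - (γ(1-γ)/2)x^2 + 4γ|x|^3. -/

import Mathlib

open Real Set

private lemma hasDerivAt_one_add_rpow (p t : ℝ) (ht : 0 < 1 + t) :
    HasDerivAt (fun s : ℝ => (1 + s) ^ p) (p * (1 + t) ^ (p - 1)) t := by
  have h2 : HasDerivAt (fun s : ℝ => 1 + s) 1 t := by
    simpa using (hasDerivAt_id t).const_add (1:ℝ)
  have h := (Real.hasDerivAt_rpow_const (x := 1 + t) (p := p) (Or.inl ht.ne'))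
  simpa [Function.comp_def] using h.comp t h2

theorem rpow_one_add_le_taylor (x γ : ℝ) (hx : -(1/2) ≤ x) (hγ0 : 0 < γ) (hγ1 : γ < 1) :
    (1 + x) ^ γ ≤ 1 + γ * x - (γ * (1 - γ) / 2) * x^2 + 4 * γ * |x|^3 := by
  rcases le_or_gt 0 x with hx0 | hx0
  · -- positive case
    rw [abs_of_nonneg hx0]
    set F : ℝ → ℝ := fun t => 1 + γ*t - γ*(1-γ)/2*t^2 + 4*γ*t^3 - (1+t)^γ with hFdef
    set f1 : ℝ → ℝ := fun t => γ - γ*(1-γ)*t + 12*γ*t^2 - γ*(1+t)^(γ-1) with hf1def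
    set f2 : ℝ → ℝ := fun t => γ*(1-γ)*((1+t)^(γ-2) - 1) + 24*γ*t with hf2def
    have hF' : ∀ t : ℝ, 0 ≤ t → HasDerivAt F (f1 t) t := by
      intro t ht
      have htp : (0:ℝ) < 1 + t := by linarith
      have h1 := hasDerivAt_one_add_rpow γ t htp
      have hid : HasDerivAt (fun s : ℝ => s) 1 t := hasDerivAt_id t
      have h2 := hasDerivAt_pow 2 t
      have h3 := hasDerivAt_pow 3 t
      have hp := ((((hid.const_mul γ).const_add 1).sub (h2.const_mul (γ*(1-γ)/2))).add
        (h3.const_mul (4*γ))).sub h1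
      refine hp.congr_deriv ?_
      push_cast
      ring
    have hf1' : ∀ t : ℝ, 0 ≤ t → HasDerivAt f1 (f2 t) t := by
      intro t ht
      have htp : (0:ℝ) < 1 + t := by linarith
      have h1 := hasDerivAt_one_add_rpow (γ-1) t htp
      rw [show γ - 1 - 1 = γ - 2 by ring] at h1
      have hid : HasDerivAt (fun s : ℝ => s) 1 t := hasDerivAt_id t
      have h2 := hasDerivAt_pow 2 t
      have hp := (((hid.const_mul (γ*(1-γ))).const_sub γ).add (h2.const_mul (12*γ))).sub
        (h1.const_mul γ)
      refine hp.congr_deriv ?_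
      push_cast
      ring
    have hf2nn : ∀ t : ℝ, 0 ≤ t → 0 ≤ f2 t := by
      intro t ht
      have htp : (0:ℝ) < 1 + t := by linarith
      have h1 : (1+t)^((-2:ℝ)) ≤ (1+t)^(γ-2) :=
        Real.rpow_le_rpow_of_exponent_le (by linarith) (by linarith)
      have h2 : (1+t)^((-2:ℝ)) = ((1+t)^2)⁻¹ := by
        rw [show ((-2:ℝ)) = ((-2:ℤ):ℝ) by norm_num, Real.rpow_intCast, zpow_neg]
        norm_num
      have hsq : (0:ℝ) < (1+t)^2 := by positivity
      have hinv : ((1+t)^2)⁻¹ * (1+t)^2 = 1 := inv_mul_cancel₀ hsq.ne'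
      have h3 : 1 - 2*t ≤ ((1+t)^2)⁻¹ := by
        rw [inv_eq_one_div, le_div_iff₀ hsq]
        nlinarith [sq_nonneg t, mul_nonneg (mul_nonneg ht ht) ht]
      have hA : 1 - 2*t ≤ (1+t)^(γ-2) := by rw [h2] at h1; linarith
      simp only [hf2def]
      nlinarith [mul_nonneg (mul_nonneg hγ0.le (by linarith : (0:ℝ) ≤ 1-γ))
        (by linarith : (0:ℝ) ≤ (1+t)^(γ-2) - (1-2*t)),
        mul_nonneg hγ0.le ht, mul_nonneg (mul_nonneg hγ0.le hγ0.le) ht]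
    -- f1 is monotone on Ici 0
    have hmono1 : MonotoneOn f1 (Ici 0) := by
      apply monotoneOn_of_deriv_nonneg (convex_Ici 0)
      · exact fun t ht => (hf1' t ht).continuousAt.continuousWithinAt
      · intro t ht
        rw [interior_Ici] at ht
        exact (hf1' t (le_of_lt ht)).differentiableAt.differentiableWithinAt
      · intro t ht
        rw [interior_Ici] at ht
        rw [(hf1' t (le_of_lt ht)).deriv]
        exact hf2nn t (le_of_lt ht)
    have hf10 : f1 0 = 0 := by simp [hf1def]
    have hf1nn : ∀ t : ℝ, 0 ≤ t → 0 ≤ f1 t := by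
      intro t ht
      have := hmono1 (self_mem_Ici) ht ht
      rw [hf10] at this
      exact this
    have hmonoF : MonotoneOn F (Ici 0) := by
      apply monotoneOn_of_deriv_nonneg (convex_Ici 0)
      · exact fun t ht => (hF' t ht).continuousAt.continuousWithinAt
      · intro t ht
        rw [interior_Ici] at ht
        exact (hF' t (le_of_lt ht)).differentiableAt.differentiableWithinAt
      · intro t ht
        rw [interior_Ici] at ht
        rw [(hF' t (le_of_lt ht)).deriv]
        exact hf1nn t (le_of_lt ht)
    have hF0 : F 0 = 0 := by simp [hFdef]
    have := hmonoF (self_mem_Ici) hx0 hx0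
    rw [hF0] at this
    simp only [hFdef] at this
    linarith
  · -- negative case
    rw [abs_of_neg hx0]
    set G : ℝ → ℝ := fun t => 1 + γ*t - γ*(1-γ)/2*t^2 - 4*γ*t^3 - (1+t)^γ with hGdef
    set g1 : ℝ → ℝ := fun t => γ - γ*(1-γ)*t - 12*γ*t^2 - γ*(1+t)^(γ-1) with hg1def
    set g2 : ℝ → ℝ := fun t => γ*(1-γ)*((1+t)^(γ-2) - 1) - 24*γ*t with hg2def
    have hG' : ∀ t : ℝ, t ∈ Icc x 0 → HasDerivAt G (g1 t) t := by
      intro t ht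
      have htp : (0:ℝ) < 1 + t := by
        have := ht.1; linarith
      have h1 := hasDerivAt_one_add_rpow γ t htp
      have hid : HasDerivAt (fun s : ℝ => s) 1 t := hasDerivAt_id t
      have h2 := hasDerivAt_pow 2 t
      have h3 := hasDerivAt_pow 3 t
      have hp := ((((hid.const_mul γ).const_add 1).sub (h2.const_mul (γ*(1-γ)/2))).sub
        (h3.const_mul (4*γ))).sub h1
      refine hp.congr_deriv ?_
      push_cast
      ring
    have hg1' : ∀ t : ℝ, t ∈ Icc x 0 → HasDerivAt g1 (g2 t) t := by
      intro t ht
      have htp : (0:ℝ) < 1 + t := by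
        have := ht.1; linarith
      have h1 := hasDerivAt_one_add_rpow (γ-1) t htp
      rw [show γ - 1 - 1 = γ - 2 by ring] at h1
      have hid : HasDerivAt (fun s : ℝ => s) 1 t := hasDerivAt_id t
      have h2 := hasDerivAt_pow 2 t
      have hp := (((hid.const_mul (γ*(1-γ))).const_sub γ).sub (h2.const_mul (12*γ))).sub
        (h1.const_mul γ)
      refine hp.congr_deriv ?_
      push_cast
      ring
    have hg2nn : ∀ t : ℝ, t ∈ Icc x 0 → 0 ≤ g2 t := by
      intro t ht
      have htp : (0:ℝ) < 1 + t := by have := ht.1; linarith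
      have ht1 : 1 + t ≤ 1 := by have := ht.2; linarith
      have h1 : (1:ℝ) ≤ (1+t)^(γ-2) :=
        Real.one_le_rpow_of_pos_of_le_one_of_nonpos htp ht1 (by linarith)
      simp only [hg2def]
      have h2 : 0 ≤ γ*(1-γ)*((1+t)^(γ-2) - 1) :=
        mul_nonneg (mul_nonneg hγ0.le (by linarith)) (by linarith)
      nlinarith [mul_nonneg hγ0.le (neg_nonneg.mpr ht.2)]
    have hmono1 : MonotoneOn g1 (Icc x 0) := by
      apply monotoneOn_of_deriv_nonneg (convex_Icc x 0)
      · exact fun t ht => (hg1' t ht).continuousAt.continuousWithinAt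
      · intro t ht
        rw [interior_Icc] at ht
        exact (hg1' t (Ioo_subset_Icc_self ht)).differentiableAt.differentiableWithinAt
      · intro t ht
        rw [interior_Icc] at ht
        rw [(hg1' t (Ioo_subset_Icc_self ht)).deriv]
        exact hg2nn t (Ioo_subset_Icc_self ht)
    have hg10 : g1 0 = 0 := by simp [hg1def]
    have hg1np : ∀ t : ℝ, t ∈ Icc x 0 → g1 t ≤ 0 := by
      intro t ht
      have h0 : (0:ℝ) ∈ Icc x 0 := ⟨hx0.le, le_refl 0⟩
      have := hmono1 ht h0 ht.2
      rw [hg10] at this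
      exact this
    have hantiG : AntitoneOn G (Icc x 0) := by
      apply antitoneOn_of_deriv_nonpos (convex_Icc x 0)
      · exact fun t ht => (hG' t ht).continuousAt.continuousWithinAt
      · intro t ht
        rw [interior_Icc] at ht
        exact (hG' t (Ioo_subset_Icc_self ht)).differentiableAt.differentiableWithinAt
      · intro t ht
        rw [interior_Icc] at ht
        rw [(hG' t (Ioo_subset_Icc_self ht)).deriv]
        exact hg1np t (Ioo_subset_Icc_self ht)
    have hG0 : G 0 = 0 := by simp [hGdef]
    have h0 : (0:ℝ) ∈ Icc x 0 := ⟨hx0.le, le_refl 0⟩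
    have hxm : x ∈ Icc x 0 := ⟨le_refl x, hx0.le⟩
    have := hantiG hxm h0 hx0.le
    rw [hG0] at this
    simp only [hGdef] at this
    linarith
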